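/- Let Ω be a nonempty convex subset of ℝⁿ and let x̄ ∈ ℝⁿ. Then the following conditions are equivalent: (a) x̄ belongs to the relative interior ri(Ω); (b) x̄ ∈ Ω and for every x ∈ Ω with x ≠ x̄ there exists u ∈ Ω such that x̄ lies in the open segment (x, u); (c) x̄ ∈ Ω and cone(Ω − x̄) is a linear subspace of ℝⁿ; (d) x̄ ∈ Ω and the closure of cone(Ω − x̄) is a linear subspace of ℝⁿ; (e) x̄ ∈ Ω and the normal cone N(x̄; Ω) is a linear subspace of ℝⁿ. -/

import Mathlib

open Set Pointwise Filter Topology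

/-- The cone generated by a set `A`: `{t • a | t ≥ 0, a ∈ A}`. -/
def coneGen {X : Type*} [AddCommGroup X] [Module ℝ X] (A : Set X) : Set X :=
  {y | ∃ t : ℝ, 0 ≤ t ∧ ∃ a ∈ A, y = t • a}

/-- A set is a linear subspace if it is the carrier of a submodule. -/
def IsLinSubspace {X : Type*} [AddCommGroup X] [Module ℝ X] (s : Set X) : Prop :=
  ∃ L : Submodule ℝ X, (L : Set X) = s

/-- Intrinsic relative interior. -/
def iri {X : Type*} [AddCommGroup X] [Module ℝ X] (Ω : Set X) : Set X :=
  {x ∈ Ω | IsLinSubspace (coneGen ((fun y => y - x) '' Ω))}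

/-- Quasi-relative interior. -/
def qri {X : Type*} [AddCommGroup X] [Module ℝ X] [TopologicalSpace X] (Ω : Set X) : Set X :=
  {x ∈ Ω | IsLinSubspace (closure (coneGen ((fun y => y - x) '' Ω)))}

/-- Relative interior in a topological vector space. -/
def ri {X : Type*} [AddCommGroup X] [Module ℝ X] [TopologicalSpace X] (Ω : Set X) : Set X :=
  {x ∈ Ω | ∃ V ∈ nhds x, V ∩ closure ((affineSpan ℝ Ω : Set X)) ⊆ Ω}

/-- Normal cone (functional-analytic version), a subset of the topological dual. -/
def normalCone {X : Type*} [AddCommGroup X] [Module ℝ X] [TopologicalSpace X]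
    (Ω : Set X) (xb : X) : Set (X →L[ℝ] ℝ) :=
  {f | ∀ x ∈ Ω, f (x - xb) ≤ 0}

/-! ### Auxiliary lemmas -/

section Aux

variable {X : Type*} [AddCommGroup X] [Module ℝ X]

lemma aux_coneGen_smul {A : Set X} {c : ℝ} (hc : 0 ≤ c) {y : X} (hy : y ∈ coneGen A) :
    c • y ∈ coneGen A := by
  obtain ⟨t, ht, a, ha, rfl⟩ := hy
  exact ⟨c * t, mul_nonneg hc ht, a, ha, smul_smul c t a⟩

lemma aux_coneGen_convex {A : Set X} (hA : Convex ℝ A) :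
    Convex ℝ (coneGen A) := by
  rintro _ ⟨t₁, ht₁, a₁, ha₁, rfl⟩ _ ⟨t₂, ht₂, a₂, ha₂, rfl⟩ p q hp hq hpq
  rcases eq_or_lt_of_le (by positivity : (0:ℝ) ≤ p * t₁ + q * t₂) with h | h
  · have h1 : p * t₁ = 0 := by nlinarith [mul_nonneg hp ht₁, mul_nonneg hq ht₂]
    have h2 : q * t₂ = 0 := by nlinarith [mul_nonneg hp ht₁, mul_nonneg hq ht₂]
    refine ⟨0, le_refl 0, a₁, ha₁, ?_⟩
    rw [smul_smul, smul_smul, h1, h2]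
    simp
  · refine ⟨p * t₁ + q * t₂, h.le,
      (p * t₁ / (p * t₁ + q * t₂)) • a₁ + (q * t₂ / (p * t₁ + q * t₂)) • a₂,
      hA ha₁ ha₂ (div_nonneg (mul_nonneg hp ht₁) h.le) (div_nonneg (mul_nonneg hq ht₂) h.le)
        (by field_simp), ?_⟩
    match_scalars <;> field_simp

lemma aux_coneGen_sub_mem {Ω : Set X} {xb x : X} (hx : x ∈ Ω) :
    x - xb ∈ coneGen ((fun y => y - xb) '' Ω) :=
  ⟨1, zero_le_one, x - xb, ⟨x, hx, rfl⟩, (one_smul _ _).symm⟩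

lemma aux_coneGen_zero_mem {Ω : Set X} {xb : X} (hxb : xb ∈ Ω) :
    (0 : X) ∈ coneGen ((fun y => y - xb) '' Ω) :=
  ⟨0, le_refl 0, xb - xb, ⟨xb, hxb, rfl⟩, (zero_smul ℝ _).symm⟩

lemma aux_image_sub_convex {Ω : Set X} (hconv : Convex ℝ Ω) (xb : X) :
    Convex ℝ ((fun y => y - xb) '' Ω) := by
  rintro _ ⟨x, hx, rfl⟩ _ ⟨y, hy, rfl⟩ p q hp hq hpq
  refine ⟨p • x + q • y, hconv hx hy hp hq hpq, ?_⟩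
  have h : p • (x - xb) + q • (y - xb) = (p • x + q • y) - (p + q) • xb := by module
  simp [hpq] at h
  simp only []
  rw [← h]

lemma aux_convex_add {K : Set X} (hKconv : Convex ℝ K)
    (hsmul : ∀ c : ℝ, 0 ≤ c → ∀ y ∈ K, c • y ∈ K) {a b : X}
    (ha : a ∈ K) (hb : b ∈ K) : a + b ∈ K := by
  have hm := hKconv ha hb (by norm_num : (0:ℝ) ≤ 1/2) (by norm_num : (0:ℝ) ≤ 1/2)
    (by norm_num : (1/2 : ℝ) + 1/2 = 1)
  have h2 := hsmul 2 (by norm_num) _ hm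
  rwa [show (2:ℝ) • ((1/2:ℝ) • a + (1/2:ℝ) • b) = a + b from by module] at h2

end Aux

section Euclid

variable {n : ℕ}

local notation "E" => EuclideanSpace ℝ (Fin n)

lemma aux_aff_closed (Ω : Set E) :
    closure ((affineSpan ℝ Ω : Set E)) = (affineSpan ℝ Ω : Set E) :=
  (affineSpan ℝ Ω).closed_of_finiteDimensional.closure_eq

lemma aux_ri_subset {Ω : Set E} : ri Ω ⊆ Ω := fun _ hx => hx.1

lemma aux_intrinsic_subset_ri {Ω : Set E} : intrinsicInterior ℝ Ω ⊆ ri Ω := by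
  intro z hz
  have hzΩ : z ∈ Ω := intrinsicInterior_subset hz
  obtain ⟨y, hy, rfl⟩ := hz
  rw [mem_interior_iff_mem_nhds, mem_nhds_subtype] at hy
  obtain ⟨V, hV, hVsub⟩ := hy
  refine ⟨hzΩ, V, hV, ?_⟩
  rw [aux_aff_closed]
  rintro w ⟨hwV, hwA⟩
  exact hVsub (show (⟨w, hwA⟩ : affineSpan ℝ Ω) ∈ Subtype.val ⁻¹' V from hwV)

lemma aux_ri_nonempty {Ω : Set E} (hne : Ω.Nonempty) (hconv : Convex ℝ Ω) :
    (ri Ω).Nonempty :=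
  (hne.intrinsicInterior hconv).mono aux_intrinsic_subset_ri

lemma aux_seg_principle {Ω : Set E} (hconv : Convex ℝ Ω)
    {x y : E} (hx : x ∈ ri Ω) (hy : y ∈ closure Ω)
    {t : ℝ} (ht0 : 0 < t) (ht1 : t ≤ 1) : t • x + (1 - t) • y ∈ ri Ω := by
  obtain ⟨hxΩ, V, hV, hsub⟩ := hx
  rw [aux_aff_closed] at hsub
  obtain ⟨ε, hε, hball⟩ := Metric.mem_nhds_iff.mp hV
  set z := t • x + (1 - t) • y with hz
  have hyA : y ∈ (affineSpan ℝ Ω : Set E) := by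
    rw [← aux_aff_closed]
    exact closure_mono (subset_affineSpan ℝ Ω) hy
  have hzA : z ∈ (affineSpan ℝ Ω : Set E) := by
    have h := AffineSubspace.smul_vsub_vadd_mem (affineSpan ℝ Ω) t
      (subset_affineSpan ℝ Ω hxΩ) hyA hyA
    simp only [vsub_eq_sub, vadd_eq_add] at h
    have : t • (x - y) + y = z := by rw [hz]; module
    rwa [this] at h
  have key : Metric.ball z (t * ε / 2) ∩ (affineSpan ℝ Ω : Set E) ⊆ Ω := by
    rintro w ⟨hwb, hwA⟩
    obtain ⟨y', hy'Ω, hy'⟩ : ∃ y' ∈ Ω, dist y y' < t * ε / 2 :=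
      Metric.mem_closure_iff.mp hy _ (by positivity)
    set x' := t⁻¹ • (w - (1 - t) • y') with hx'
    have hx'A : x' ∈ (affineSpan ℝ Ω : Set E) := by
      have h := AffineSubspace.smul_vsub_vadd_mem (affineSpan ℝ Ω) t⁻¹
        hwA (subset_affineSpan ℝ Ω hy'Ω) (subset_affineSpan ℝ Ω hy'Ω)
      simp only [vsub_eq_sub, vadd_eq_add] at h
      have : t⁻¹ • (w - y') + y' = x' := by
        rw [hx']
        match_scalars <;> field_simp <;> ring
      rwa [this] at h
    have hdiff : x' - x = t⁻¹ • ((w - z) + (1 - t) • (y - y')) := by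
      rw [hx', hz]
      match_scalars <;> field_simp <;> ring
    have hnorm : dist x' x < ε := by
      rw [dist_eq_norm, hdiff, norm_smul]
      have h1 : ‖w - z‖ < t * ε / 2 := by
        rw [← dist_eq_norm]; exact hwb
      have h2 : ‖(1 - t) • (y - y')‖ < t * ε / 2 := by
        rw [norm_smul, Real.norm_eq_abs, abs_of_nonneg (by linarith)]
        calc (1 - t) * ‖y - y'‖ ≤ 1 * ‖y - y'‖ := by
              apply mul_le_mul_of_nonneg_right (by linarith) (norm_nonneg _)
          _ = ‖y - y'‖ := one_mul _
          _ < t * ε / 2 := by rw [← dist_eq_norm]; exact hy'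
      have h3 : ‖w - z + (1 - t) • (y - y')‖ < t * ε := by
        calc ‖w - z + (1 - t) • (y - y')‖ ≤ ‖w - z‖ + ‖(1 - t) • (y - y')‖ := norm_add_le _ _
          _ < t * ε / 2 + t * ε / 2 := by linarith
          _ = t * ε := by ring
      rw [Real.norm_eq_abs, abs_of_pos (by positivity)]
      calc t⁻¹ * ‖w - z + (1 - t) • (y - y')‖ < t⁻¹ * (t * ε) :=
            mul_lt_mul_of_pos_left h3 (by positivity)
        _ = ε := by field_simp
    have hx'Ω : x' ∈ Ω := hsub ⟨hball (Metric.mem_ball.mpr hnorm), hx'A⟩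
    have hw : w = t • x' + (1 - t) • y' := by
      rw [hx']
      match_scalars <;> field_simp <;> ring
    rw [hw]
    exact hconv hx'Ω hy'Ω ht0.le (by linarith) (by ring)
  have hzΩ : z ∈ Ω := key ⟨Metric.mem_ball_self (by positivity), hzA⟩
  refine ⟨hzΩ, Metric.ball z (t * ε / 2), Metric.ball_mem_nhds _ (by positivity), ?_⟩
  rw [aux_aff_closed]
  exact key

/-- The `≤ 0` description of the normal cone set in terms of the closed generated cone. -/
lemma aux_normal_char {Ω : Set E} {xb : E} (v : E) :
    (∀ x ∈ Ω, (inner ℝ v (x - xb) : ℝ) ≤ 0) ↔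
      ∀ k ∈ closure (coneGen ((fun y => y - xb) '' Ω)), (inner ℝ v k : ℝ) ≤ 0 := by
  constructor
  · intro hv
    have hK : ∀ k ∈ coneGen ((fun y => y - xb) '' Ω), (inner ℝ v k : ℝ) ≤ 0 := by
      rintro _ ⟨t, ht, _, ⟨x, hxΩ, rfl⟩, rfl⟩
      rw [real_inner_smul_right]
      exact mul_nonpos_iff.mpr (Or.inl ⟨ht, hv x hxΩ⟩)
    intro k hk
    have hcl : IsClosed {k : EuclideanSpace ℝ (Fin n) | (inner ℝ v k : ℝ) ≤ 0} :=
      isClosed_le (Continuous.inner continuous_const continuous_id) continuous_const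
    exact closure_minimal hK hcl hk
  · intro h x hxΩ
    exact h (x - xb) (subset_closure (aux_coneGen_sub_mem hxΩ))

end Euclid

/-- characterizations of the relative interior of a nonempty convex set in ℝⁿ. -/
theorem relative_interior_characterizations {n : ℕ} (Ω : Set (EuclideanSpace ℝ (Fin n)))
    (hne : Ω.Nonempty) (hconv : Convex ℝ Ω) (xb : EuclideanSpace ℝ (Fin n)) :
    List.TFAE [
      xb ∈ ri Ω,
      xb ∈ Ω ∧ ∀ x ∈ Ω, x ≠ xb → ∃ u ∈ Ω, xb ∈ openSegment ℝ x u,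
      xb ∈ Ω ∧ IsLinSubspace (coneGen ((fun y => y - xb) '' Ω)),
      xb ∈ Ω ∧ IsLinSubspace (closure (coneGen ((fun y => y - xb) '' Ω))),
      xb ∈ Ω ∧ IsLinSubspace {v : EuclideanSpace ℝ (Fin n) |
        ∀ x ∈ Ω, (inner ℝ v (x - xb) : ℝ) ≤ 0} ] := by
  set K := coneGen ((fun y => y - xb) '' Ω) with hKdef
  tfae_have 1 → 2 := by
    rintro ⟨hxbΩ, V, hV, hsub⟩
    rw [aux_aff_closed] at hsub
    obtain ⟨ε, hε, hball⟩ := Metric.mem_nhds_iff.mp hV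
    refine ⟨hxbΩ, fun x hxΩ hne' => ?_⟩
    set η := ε / (‖xb - x‖ + 1) with hη
    have hηpos : 0 < η := div_pos hε (by positivity)
    have huA : xb + η • (xb - x) ∈ (affineSpan ℝ Ω : Set (EuclideanSpace ℝ (Fin n))) := by
      have h := AffineSubspace.smul_vsub_vadd_mem (affineSpan ℝ Ω) η
        (subset_affineSpan ℝ Ω hxbΩ) (subset_affineSpan ℝ Ω hxΩ)
        (subset_affineSpan ℝ Ω hxbΩ)
      simp only [vsub_eq_sub, vadd_eq_add] at h
      rwa [show η • (xb - x) + xb = xb + η • (xb - x) from by module] at h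
    have hudist : dist (xb + η • (xb - x)) xb < ε := by
      rw [dist_eq_norm, add_sub_cancel_left, norm_smul, Real.norm_eq_abs,
        abs_of_pos hηpos, hη]
      rw [div_mul_eq_mul_div, div_lt_iff₀ (by positivity)]
      nlinarith [norm_nonneg (xb - x)]
    have huΩ : xb + η • (xb - x) ∈ Ω := hsub ⟨hball (Metric.mem_ball.mpr hudist), huA⟩
    refine ⟨xb + η • (xb - x), huΩ, η / (1 + η), 1 / (1 + η),
      div_pos hηpos (by linarith), div_pos one_pos (by linarith), by field_simp; ring, ?_⟩
    have h1η : (1 + η) ≠ 0 := by positivity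
    apply smul_right_injective _ h1η
    show (1 + η) • _ = (1 + η) • xb
    match_scalars <;> field_simp <;> ring
  tfae_have 2 → 3 := by
    rintro ⟨hxbΩ, h2⟩
    have hKconv : Convex ℝ K := aux_coneGen_convex (aux_image_sub_convex hconv xb)
    have hneg : ∀ y ∈ K, -y ∈ K := by
      rintro _ ⟨t, ht, _, ⟨x, hxΩ, rfl⟩, rfl⟩
      by_cases hxx : x = xb
      · subst hxx
        simp only [sub_self, smul_zero, neg_zero]
        exact aux_coneGen_zero_mem hxbΩ
      obtain ⟨u, huΩ, a, b, ha, hb, hab, hcomb⟩ := h2 x hxΩ hxx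
      refine ⟨t * (b / a), by positivity, u - xb, ⟨u, huΩ, rfl⟩, ?_⟩
      have h0 : a • (x - xb) + b • (u - xb) = 0 := by
        have h0' : a • x + b • u - (a + b) • xb = a • (x - xb) + b • (u - xb) := by module
        rw [hab, one_smul, hcomb, sub_self] at h0'
        exact h0'.symm
      have key : a • (x - xb) = -(b • (u - xb)) := eq_neg_of_add_eq_zero_left h0
      have key2 := congrArg (fun v => a⁻¹ • v) key
      simp only [smul_smul, smul_neg] at key2
      rw [inv_mul_cancel₀ ha.ne', one_smul] at key2
      show -(t • (x - xb)) = (t * (b / a)) • (u - xb)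
      rw [key2, smul_neg, neg_neg, smul_smul]
      congr 1
      field_simp
    refine ⟨hxbΩ,
      { carrier := K
        add_mem' := fun {a b} ha hb =>
          aux_convex_add hKconv (fun c hc y hy => aux_coneGen_smul hc hy) ha hb
        zero_mem' := aux_coneGen_zero_mem hxbΩ
        smul_mem' := ?_ }, rfl⟩
    intro c y hy
    rcases le_or_gt 0 c with hc | hc
    · exact aux_coneGen_smul hc hy
    · have h1 := aux_coneGen_smul (by linarith : (0:ℝ) ≤ -c) (hneg y hy)
      rwa [neg_smul_neg] at h1
  tfae_have 3 → 2 := by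
    rintro ⟨hxbΩ, L, hL⟩
    refine ⟨hxbΩ, fun x hxΩ hne' => ?_⟩
    have hx1 : x - xb ∈ K := aux_coneGen_sub_mem hxΩ
    have hx2 : x - xb ∈ L := by rw [← SetLike.mem_coe, hL]; exact hx1
    have hmem : -(x - xb) ∈ K := by
      have h' := L.neg_mem hx2
      rwa [← SetLike.mem_coe, hL] at h'
    obtain ⟨t, ht, _, ⟨u, huΩ, rfl⟩, heq⟩ := hmem
    have htpos : 0 < t := by
      rcases ht.lt_or_eq with h | h
      · exact h
      · exfalso
        rw [← h, zero_smul, neg_eq_zero, sub_eq_zero] at heq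
        exact hne' heq
    have h1t : (0:ℝ) < 1 + t := by linarith
    refine ⟨u, huΩ, 1 / (1 + t), t / (1 + t), div_pos one_pos h1t, div_pos htpos h1t,
      by field_simp, ?_⟩
    have hkey : x - xb + t • (u - xb) = 0 := by rw [← heq]; abel
    apply smul_right_injective _ h1t.ne'
    show (1 + t) • _ = (1 + t) • xb
    have : (1 + t) • ((1 / (1 + t)) • x + (t / (1 + t)) • u) = x + t • u := by
      match_scalars <;> field_simp
    rw [this]
    have : x + t • u - (1 + t) • xb = x - xb + t • (u - xb) := by module
    have h2 : x + t • u - (1 + t) • xb = 0 := by rw [this, hkey]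
    linear_combination (norm := module) h2
  tfae_have 3 → 4 := by
    rintro ⟨hxbΩ, L, hL⟩
    exact ⟨hxbΩ, L.topologicalClosure, by rw [Submodule.topologicalClosure_coe, hL]⟩
  tfae_have 4 → 3 := by
    rintro ⟨hxbΩ, L, hL⟩
    have hKconv : Convex ℝ K := aux_coneGen_convex (aux_image_sub_convex hconv xb)
    have hKne : K.Nonempty := ⟨0, aux_coneGen_zero_mem hxbΩ⟩
    obtain ⟨z, hz⟩ := aux_ri_nonempty hKne hKconv
    refine ⟨hxbΩ, L, ?_⟩
    rw [hL]
    refine Subset.antisymm (fun w hw => ?_) subset_closure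
    have hwL : w ∈ L := by rw [← SetLike.mem_coe, hL]; exact hw
    have hzL : z ∈ L := by
      rw [← SetLike.mem_coe, hL]; exact subset_closure (aux_ri_subset hz)
    have h2w : (2:ℝ) • w - z ∈ closure K := by
      rw [← hL]
      exact SetLike.mem_coe.mpr (L.sub_mem (L.smul_mem 2 hwL) hzL)
    have hseg := aux_seg_principle hKconv hz h2w (by norm_num : (0:ℝ) < 1/2) (by norm_num)
    rw [show (1/2 : ℝ) • z + (1 - 1/2 : ℝ) • ((2:ℝ) • w - z) = w from by module] at hseg
    exact aux_ri_subset hseg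
  tfae_have 4 → 5 := by
    rintro ⟨hxbΩ, L, hL⟩
    refine ⟨hxbΩ, Lᗮ, ?_⟩
    ext v
    rw [SetLike.mem_coe, Submodule.mem_orthogonal, mem_setOf_eq]
    constructor
    · intro h
      rw [aux_normal_char]
      intro k hk
      rw [← hL] at hk
      rw [real_inner_comm, h k hk]
    · intro hv u huL
      rw [aux_normal_char] at hv
      have h1 := hv u (by rw [← hL]; exact SetLike.mem_coe.mpr huL)
      have h2 := hv (-u) (by rw [← hL]; exact SetLike.mem_coe.mpr (L.neg_mem huL))
      rw [inner_neg_right] at h2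
      rw [real_inner_comm]
      linarith
  tfae_have 5 → 4 := by
    rintro ⟨hxbΩ, M, hM⟩
    refine ⟨hxbΩ, Mᗮ, ?_⟩
    have hKconv : Convex ℝ K := aux_coneGen_convex (aux_image_sub_convex hconv xb)
    set Kc : ConvexCone ℝ (EuclideanSpace ℝ (Fin n)) :=
      { carrier := K
        smul_mem' := fun c hc y hy => aux_coneGen_smul hc.le hy
        add_mem' := fun a ha b hb =>
          aux_convex_add hKconv (fun c hc y hy => aux_coneGen_smul hc hy) ha hb } with hKc
    have hKcS : (Kc : Set (EuclideanSpace ℝ (Fin n))) = K := rfl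
    set Cc := Kc.closure with hCcdef
    have hCc : (Cc : Set (EuclideanSpace ℝ (Fin n))) = closure K := by
      rw [hCcdef, ConvexCone.coe_closure, hKcS]
    have hCne : (Cc : Set (EuclideanSpace ℝ (Fin n))).Nonempty := by
      rw [hCc]; exact ⟨0, subset_closure (aux_coneGen_zero_mem hxbΩ)⟩
    have hCcl : IsClosed (Cc : Set (EuclideanSpace ℝ (Fin n))) := by rw [hCc]; exact isClosed_closure
    have hbipset : (ProperCone.innerDual (ProperCone.innerDual (Cc : Set (EuclideanSpace ℝ (Fin n))) : Set (EuclideanSpace ℝ (Fin n))) : Set (EuclideanSpace ℝ (Fin n)))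
        = (Cc : Set (EuclideanSpace ℝ (Fin n))) := by
      have h0 : (0 : EuclideanSpace ℝ (Fin n)) ∈ Cc := by
        rw [← SetLike.mem_coe, hCc]; exact subset_closure (aux_coneGen_zero_mem hxbΩ)
      obtain ⟨P, hP⟩ : ∃ P : ProperCone ℝ (EuclideanSpace ℝ (Fin n)), (P : Set (EuclideanSpace ℝ (Fin n))) = Cc :=
        ⟨⟨{ carrier := Cc
            add_mem' := fun ha hb => Cc.add_mem ha hb
            zero_mem' := h0
            smul_mem' := fun c x hx => by
              show (c : ℝ) • x ∈ Cc
              rcases c.2.eq_or_lt with h | h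
              · rw [← h, zero_smul]; exact h0
              · exact Cc.smul_mem h hx }, hCcl⟩, rfl⟩
      rw [← hP]
      exact congrArg _ (ProperCone.innerDual_innerDual P)
    have hNchar : ∀ v, v ∈ (M : Set (EuclideanSpace ℝ (Fin n))) ↔
        ∀ k ∈ closure K, (inner ℝ v k : ℝ) ≤ 0 := by
      intro v
      rw [hM, mem_setOf_eq]
      exact aux_normal_char v
    have hD : (ProperCone.innerDual (Cc : Set (EuclideanSpace ℝ (Fin n))) : Set (EuclideanSpace ℝ (Fin n))) = (M : Set (EuclideanSpace ℝ (Fin n))) := by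
      ext y
      rw [SetLike.mem_coe, ProperCone.mem_innerDual]
      constructor
      · intro h
        have hy : -y ∈ (M : Set (EuclideanSpace ℝ (Fin n))) := by
          rw [hNchar]
          intro k hk
          have := h (x := k) (by rwa [hCc])
          rw [inner_neg_left]
          rw [real_inner_comm] at this
          linarith
        have := M.neg_mem (SetLike.mem_coe.mp hy)
        rw [neg_neg] at this
        exact this
      · intro hy k hk
        have hy' : -y ∈ (M : Set (EuclideanSpace ℝ (Fin n))) := SetLike.mem_coe.mpr (M.neg_mem (SetLike.mem_coe.mp hy))
        rw [hNchar] at hy'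
        have := hy' k (by rwa [hCc] at hk)
        rw [inner_neg_left] at this
        rw [real_inner_comm] at this
        linarith
    have hMperp : (ProperCone.innerDual (M : Set (EuclideanSpace ℝ (Fin n))) : Set (EuclideanSpace ℝ (Fin n))) = (Mᗮ : Set (EuclideanSpace ℝ (Fin n))) := by
      ext w
      rw [SetLike.mem_coe, ProperCone.mem_innerDual, SetLike.mem_coe, Submodule.mem_orthogonal]
      constructor
      · intro h v hv
        have h1 := h (SetLike.mem_coe.mpr hv)
        have h2 := h (SetLike.mem_coe.mpr (M.neg_mem hv))
        rw [inner_neg_left] at h2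
        linarith
      · intro h v hv
        rw [h v (SetLike.mem_coe.mp hv)]
    calc (Mᗮ : Set (EuclideanSpace ℝ (Fin n))) = (ProperCone.innerDual (M : Set (EuclideanSpace ℝ (Fin n))) : Set (EuclideanSpace ℝ (Fin n))) := hMperp.symm
      _ = (ProperCone.innerDual (ProperCone.innerDual (Cc : Set (EuclideanSpace ℝ (Fin n))) : Set (EuclideanSpace ℝ (Fin n))) : Set (EuclideanSpace ℝ (Fin n))) := by rw [hD]
      _ = (Cc : Set (EuclideanSpace ℝ (Fin n))) := hbipset
      _ = closure K := hCc
  tfae_have 2 → 1 := by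
    rintro ⟨hxbΩ, h2⟩
    obtain ⟨z, hz⟩ := aux_ri_nonempty hne hconv
    by_cases hzxb : z = xb
    · rwa [hzxb] at hz
    obtain ⟨u, huΩ, a, b, ha, hb, hab, hcomb⟩ := h2 z (aux_ri_subset hz) hzxb
    have hseg := aux_seg_principle hconv hz (subset_closure huΩ) ha (by linarith)
    rwa [show (1 : ℝ) - a = b from by linarith, hcomb] at hseg
  tfae_finish
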